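/- There exists a constant c > 0 such that for every integer n ≥ 2 and every integer δ with 2 ≤ δ ≤ n, there exists a string S of length n over some finite alphabet with δ(S) = δ and γ(S) ≥ c·δ·log₂(2n/δ). -/

import Mathlib

/-- The set of distinct length-`k` contiguous substrings of `S`. -/
def substrings {α : Type} [DecidableEq α] (S : List α) (k : ℕ) : Finset (List α) :=
  ((Finset.range (S.length + 1)).image (fun i => (S.drop i).take k)).filter
    (fun t => t.length = k)

/-- `d_k(S)`: the number of distinct length-`k` substrings of `S`. -/
def subCount {α : Type} [DecidableEq α] (S : List α) (k : ℕ) : ℕ :=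
  (substrings S k).card

/-- The measure `δ(S) = max { d_k(S)/k : 1 ≤ k ≤ |S| }` (with value 0 for the empty string). -/
def delta {α : Type} [DecidableEq α] (S : List α) : ℚ :=
  if h : S = [] then 0
  else
    (Finset.Icc 1 S.length).sup'
      (Finset.nonempty_Icc.mpr (Nat.one_le_iff_ne_zero.mpr
        (fun h0 => h (List.length_eq_zero_iff.mp h0))))
      (fun k => (subCount S k : ℚ) / k)

/-- `Γ` is an attractor of `S`: every nonempty substring `S[i..j]` (1-based) has an
occurrence `S[i'..j']` covering a position of `Γ`. -/
def IsAttractor {α : Type} (S : List α) (Γ : Finset ℕ) : Prop :=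
  (∀ p ∈ Γ, 1 ≤ p ∧ p ≤ S.length) ∧
  ∀ i j : ℕ, 1 ≤ i → i ≤ j → j ≤ S.length →
    ∃ i' j' : ℕ, 1 ≤ i' ∧ i' ≤ j' ∧ j' ≤ S.length ∧
      (S.drop (i' - 1)).take (j' - i' + 1) = (S.drop (i - 1)).take (j - i + 1) ∧
      ∃ p ∈ Γ, i' ≤ p ∧ p ≤ j'

/-- `γ(S)`: the minimum size of an attractor of `S`. -/
noncomputable def gamma {α : Type} (S : List α) : ℕ :=
  sInf { m | ∃ Γ : Finset ℕ, IsAttractor S Γ ∧ Γ.card = m }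

namespace GD

/-- positions of the separator letters inside a block -/
def Q : ℕ → ℕ
  | 0 => 0
  | r+1 => Q r + 8^r + 1

lemma Q_succ (r : ℕ) : Q (r+1) = Q r + 8^r + 1 := rfl

lemma Q_zero : Q 0 = 0 := rfl

lemma Q_strictMono : StrictMono Q := by
  apply strictMono_nat_of_lt_succ
  intro r
  have : 0 < 8^r := Nat.pow_pos (by norm_num)
  rw [Q_succ]; omega

lemma Q_mono : Monotone Q := Q_strictMono.monotone

lemma Q_le_pow (r : ℕ) : Q r ≤ 8^r := by
  induction r with
  | zero => simp [Q_zero]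
  | succ r ih =>
    have : 1 ≤ (8:ℕ)^r := Nat.one_le_pow _ _ (by norm_num)
    have h8 : (8:ℕ)^(r+1) = 8^r * 8 := pow_succ 8 r
    rw [Q_succ]
    omega

lemma Q_ge (r : ℕ) : 2 * r ≤ Q r := by
  induction r with
  | zero => simp
  | succ r ih =>
    have : 1 ≤ (8:ℕ)^r := Nat.one_le_pow _ _ (by norm_num)
    rw [Q_succ]; omega

/-- The letter at position `x` of the constructed string with `s` blocks,
`m` junk letters, and `t` runs per block.  Letters of block `j` are `2j` (the run
letter) and `2j+1` (the separator letter); junk letters are `2s+i`. -/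
def ff (s m t : ℕ) (x : ℕ) : ℕ :=
  if x < m then 2*s + x
  else if (x - m) - (min ((x - m) / Q t) (s-1)) * Q t ∈ (Finset.range t).image Q
       then 2 * (min ((x - m) / Q t) (s-1)) + 1
       else 2 * (min ((x - m) / Q t) (s-1))

/-- total length -/
def NN (s m t P : ℕ) : ℕ := m + s * Q t + P

/-- the string itself -/
def Sstr (s m t P : ℕ) : List ℕ := (List.range (NN s m t P)).map (ff s m t)

/-- the window of length `k` starting at (0-based) position `q` -/
def win (s m t : ℕ) (q k : ℕ) : List ℕ := (List.range k).map (fun x => ff s m t (q + x))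

section Basic

variable {s m t P : ℕ}

lemma Qt_pos (ht : 1 ≤ t) : 2 ≤ Q t := by
  have := Q_ge t; omega

lemma ff_junk (s t : ℕ) {m x : ℕ} (hx : x < m) : ff s m t x = 2*s + x := if_pos hx

lemma ff_block (ht : 1 ≤ t) {j z : ℕ} (hj : j < s) (hz : z < Q t ∨ j = s - 1) :
    ff s m t (m + j * Q t + z) =
      if z ∈ (Finset.range t).image Q then 2*j+1 else 2*j := by
  have hQ : 0 < Q t := by have := Qt_pos ht; omega
  have h1 : ¬ (m + j * Q t + z < m) := by omega
  have h2 : (m + j * Q t + z) - m = j * Q t + z := by omega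
  have h3 : min ((j * Q t + z) / Q t) (s-1) = j := by
    rcases hz with hz | hz
    · have : (j * Q t + z) / Q t = j := by
        rw [mul_comm, Nat.mul_add_div hQ, Nat.div_eq_of_lt hz]
        omega
      rw [this]; omega
    · have : s - 1 ≤ (j * Q t + z) / Q t := by
        rw [Nat.le_div_iff_mul_le hQ]
        subst hz; exact Nat.le_add_right _ _
      omega
  have h4 : j * Q t + z - j * Q t = z := by omega
  rw [ff, if_neg h1, h2, h3, h4]

lemma ff_odd (ht : 1 ≤ t) {j r : ℕ} (hj : j < s) (hr : r < t) :
    ff s m t (m + j * Q t + Q r) = 2*j+1 := by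
  rw [ff_block ht hj (Or.inl (Q_strictMono (show r < t from hr)))]
  rw [if_pos]
  exact Finset.mem_image.mpr ⟨r, Finset.mem_range.mpr hr, rfl⟩

lemma ff_run (ht : 1 ≤ t) {j z : ℕ} (hj : j < s) (hz : z < Q t ∨ j = s - 1)
    (hnr : ∀ r < t, Q r ≠ z) : ff s m t (m + j * Q t + z) = 2*j := by
  rw [ff_block ht hj hz, if_neg]
  intro hmem
  obtain ⟨r, hr, hrz⟩ := Finset.mem_image.mp hmem
  exact hnr r (Finset.mem_range.mp hr) hrz

lemma ff_cases (ht : 1 ≤ t) (hs : 1 ≤ s) {x : ℕ} (hx : x < NN s m t P) :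
    (x < m ∧ ff s m t x = 2*s + x) ∨
    (∃ j < s, ∃ z, x = m + j * Q t + z ∧ (z < Q t ∨ (j = s - 1 ∧ z < Q t + P)) ∧
      ff s m t x = if z ∈ (Finset.range t).image Q then 2*j+1 else 2*j) := by
  have hQ : 0 < Q t := by have := Qt_pos ht; omega
  rcases Nat.lt_or_ge x m with hxm | hxm
  · exact Or.inl ⟨hxm, ff_junk s t hxm⟩
  · right
    have hxN : x < m + s * Q t + P := hx
    have hj1 : min ((x-m) / Q t) (s-1) * Q t ≤ x - m := by
      calc min ((x-m) / Q t) (s-1) * Q t ≤ ((x-m) / Q t) * Q t :=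
        Nat.mul_le_mul_right _ (min_le_left _ _)
      _ ≤ x - m := Nat.div_mul_le_self _ _
    refine ⟨min ((x-m) / Q t) (s-1), by omega,
      (x - m) - min ((x-m) / Q t) (s-1) * Q t, by omega, ?_, ?_⟩
    · rcases Nat.lt_or_ge ((x-m) / Q t) s with hq | hq
      · have hmin : min ((x-m) / Q t) (s-1) = (x-m) / Q t ∨
            min ((x-m) / Q t) (s-1) = s - 1 := min_choice _ _
        rcases Nat.lt_or_ge ((x-m)/Q t) (s-1) with hlt | hge
        · left
          rw [min_eq_left (by omega)]
          have h6 : (x-m) / Q t * Q t + (x-m) % Q t = x - m := Nat.div_add_mod' _ _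
          have h7 : (x-m) % Q t < Q t := Nat.mod_lt _ hQ
          omega
        · have hmin2 : min ((x-m) / Q t) (s-1) = s - 1 := min_eq_right (by omega)
          right
          refine ⟨hmin2, ?_⟩
          rw [hmin2]
          have h1 : (s-1) * Q t + Q t = s * Q t := by
            calc (s-1) * Q t + Q t = ((s-1)+1) * Q t := by ring
            _ = s * Q t := by congr 1; omega
          omega
      · have hmin2 : min ((x-m) / Q t) (s-1) = s - 1 := min_eq_right (by omega)
        right
        refine ⟨hmin2, ?_⟩
        rw [hmin2]
        have h1 : (s-1) * Q t + Q t = s * Q t := by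
          calc (s-1) * Q t + Q t = ((s-1)+1) * Q t := by ring
          _ = s * Q t := by congr 1; omega
        have h2 : (s-1) * Q t ≤ x - m := by
          calc (s-1) * Q t ≤ ((x-m) / Q t) * Q t := Nat.mul_le_mul_right _ (by omega)
          _ ≤ x - m := Nat.div_mul_le_self _ _
        omega
    · rw [ff, if_neg (by omega)]

lemma ff_odd_inv (ht : 1 ≤ t) (hs : 1 ≤ s) {x j : ℕ} (hx : x < NN s m t P) (hj : j < s)
    (hodd : ff s m t x = 2*j+1) : ∃ r < t, x = m + j * Q t + Q r := by
  rcases ff_cases (P := P) ht hs hx with ⟨hxm, hval⟩ | ⟨j', hj', z, hxe, hz, hval⟩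
  · omega
  · rw [hval] at hodd
    by_cases hmem : z ∈ (Finset.range t).image Q
    · rw [if_pos hmem] at hodd
      obtain ⟨r, hr, hrz⟩ := Finset.mem_image.mp hmem
      have : j' = j := by omega
      subst this
      exact ⟨r, Finset.mem_range.mp hr, by omega⟩
    · rw [if_neg hmem] at hodd; omega

end Basic

section Window

variable {s m t P : ℕ}

lemma Sstr_length : (Sstr s m t P).length = NN s m t P := by
  rw [Sstr, List.length_map, List.length_range]

lemma win_length (q k : ℕ) : (win s m t q k).length = k := by
  rw [win, List.length_map, List.length_range]

lemma Sstr_drop_take {q k : ℕ} (h : q + k ≤ NN s m t P) :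
    ((Sstr s m t P).drop q).take k = win s m t q k := by
  rw [Sstr, ← List.map_drop, ← List.map_take]
  have h2 : List.take k (List.drop q (List.range (NN s m t P)))
      = List.map (fun x => q + x) (List.range k) := by
    rw [show NN s m t P = q + (NN s m t P - q) by omega, List.range_add]
    rw [List.drop_append_of_le_length (by simp)]
    rw [List.drop_eq_nil_of_le (by simp), List.nil_append, ← List.map_take,
      List.take_range, min_eq_left (by omega)]
  rw [h2, List.map_map, win]
  rfl

lemma win_ptwise {k q : ℕ} {g : ℕ → ℕ} (h : win s m t q k = (List.range k).map g) :
    ∀ x < k, ff s m t (q + x) = g x := by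
  intro x hx
  have h1 : x < (win s m t q k).length := by rw [win_length]; exact hx

  have h2 : x < ((List.range k).map g).length := by
    rw [List.length_map, List.length_range]; exact hx
  have := List.getElem_of_eq h h1
  simp only [win, List.getElem_map, List.getElem_range] at this
  exact this

lemma win_congr {k q : ℕ} {g : ℕ → ℕ} (h : ∀ x < k, ff s m t (q + x) = g x) :
    win s m t q k = (List.range k).map g := by
  exact List.map_congr_left (fun x hx => h x (List.mem_range.mp hx))

lemma mem_substrings {u : List ℕ} {k : ℕ} (hu : u ∈ substrings (Sstr s m t P) k) :
    ∃ q, q + k ≤ NN s m t P ∧ u = win s m t q k := by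
  rw [substrings, Finset.mem_filter, Finset.mem_image] at hu
  obtain ⟨⟨i, hi, hui⟩, hlen⟩ := hu
  rw [Finset.mem_range, Sstr_length] at hi
  subst hui
  have hlen2 : (((Sstr s m t P).drop i).take k).length = k := hlen
  rw [List.length_take, List.length_drop, Sstr_length] at hlen2
  have hik : i + k ≤ NN s m t P := by omega
  exact ⟨i, hik, Sstr_drop_take hik⟩

lemma win_mem_substrings {q k : ℕ} (h : q + k ≤ NN s m t P) :
    win s m t q k ∈ substrings (Sstr s m t P) k := by
  rw [substrings, Finset.mem_filter, Finset.mem_image]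
  exact ⟨⟨q, Finset.mem_range.mpr (by rw [Sstr_length]; omega), Sstr_drop_take h⟩,
    win_length q k⟩

end Window

section Count

variable {s m t P : ℕ}

def wordA (k j : ℕ) : List ℕ := (List.range k).map (fun _ => 2*j)

def wordB (k j p : ℕ) : List ℕ :=
  (List.range k).map (fun x => if x = p then 2*j+1 else 2*j)

def PinSet (s m t k : ℕ) : Finset ℕ :=
  ((Finset.range s).biUnion (fun j =>
      Finset.Icc (m + j * Q t) (m + j * Q t + Q (Nat.log 8 (k-2)))))
  ∪ ((Finset.range s).biUnion (fun j => Finset.Ico (m + j * Q t + 1 - k) (m + j * Q t)))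
  ∪ Finset.Ico 0 (m + 1 - k)

def WordSet (s m t P k : ℕ) : Finset (List ℕ) :=
  ((Finset.range s).image (wordA k))
  ∪ ((Finset.range s ×ˢ Finset.range k).image (fun jp => wordB k jp.1 jp.2))
  ∪ ((PinSet s m t k).image (fun q => win s m t q k))

lemma substrings_subset (hs : 1 ≤ s) (ht : 1 ≤ t) {k : ℕ} (hk : 2 ≤ k) :
    substrings (Sstr s m t P) k ⊆ WordSet s m t P k := by
  intro u hu
  obtain ⟨q, hqk, rfl⟩ := mem_substrings hu
  have hQ : 0 < Q t := by have := Qt_pos ht; omega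
  have hpin : q ∈ PinSet s m t k → win s m t q k ∈ WordSet s m t P k := by
    intro hq
    exact Finset.mem_union_right _ (Finset.mem_image.mpr ⟨q, hq, rfl⟩)
  by_cases hJ : q + k ≤ m
  · exact hpin (Finset.mem_union_right _ (Finset.mem_Ico.mpr ⟨Nat.zero_le _, by omega⟩))
  push_neg at hJ
  by_cases hJ2 : q < m
  · apply hpin
    apply Finset.mem_union_left
    apply Finset.mem_union_right
    exact Finset.mem_biUnion.mpr ⟨0, Finset.mem_range.mpr (by omega),
      Finset.mem_Ico.mpr ⟨by omega, by omega⟩⟩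
  push_neg at hJ2
  -- inside the block region
  set j := min ((q - m) / Q t) (s-1) with hjdef
  have hj : j < s := by omega
  have hjq : m + j * Q t ≤ q := by
    have h1 : j * Q t ≤ ((q-m) / Q t) * Q t :=
      Nat.mul_le_mul_right _ (min_le_left _ _)
    have h2 : ((q-m) / Q t) * Q t ≤ q - m := Nat.div_mul_le_self _ _
    omega
  by_cases hW : q + k ≤ m + j * Q t + Q t ∨ j = s - 1
  · -- window entirely within block j
    set z₀ := q - (m + j * Q t) with hz₀
    have hblock : ∀ x < k, ff s m t (q + x) =
        if z₀ + x ∈ (Finset.range t).image Q then 2*j+1 else 2*j := by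
      intro x hx
      have he : q + x = m + j * Q t + (z₀ + x) := by omega
      rw [he, ff_block ht hj]
      rcases hW with hW | hW
      · exact Or.inl (by omega)
      · exact Or.inr hW
    by_cases hBe : ∀ x < k, (z₀ + x) ∉ (Finset.range t).image Q
    · -- no separator: word is a^k
      apply Finset.mem_union_left
      apply Finset.mem_union_left
      apply Finset.mem_image.mpr
      refine ⟨j, Finset.mem_range.mpr hj, ?_⟩
      symm
      apply win_congr
      intro x hx
      rw [hblock x hx, if_neg (hBe x hx)]
    · push_neg at hBe
      obtain ⟨x₁, hx₁k, hx₁m⟩ := hBe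
      by_cases hB1 : ∀ x < k, (z₀ + x) ∈ (Finset.range t).image Q → x = x₁
      · -- exactly one separator
        apply Finset.mem_union_left
        apply Finset.mem_union_right
        apply Finset.mem_image.mpr
        refine ⟨(j, x₁), Finset.mem_product.mpr
          ⟨Finset.mem_range.mpr hj, Finset.mem_range.mpr hx₁k⟩, ?_⟩
        symm
        apply win_congr
        intro x hx
        rw [hblock x hx]
        by_cases hxx : x = x₁
        · subst hxx
          rw [if_pos hx₁m, if_pos rfl]
        · rw [if_neg (fun hmem => hxx (hB1 x hx hmem)), if_neg hxx]
      · -- at least two separators: pinned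
        push_neg at hB1
        obtain ⟨x₂, hx₂k, hx₂m, hx₂ne⟩ := hB1
        obtain ⟨r₁, hr₁t, hr₁⟩ := Finset.mem_image.mp hx₁m
        obtain ⟨r₂, hr₂t, hr₂⟩ := Finset.mem_image.mp hx₂m
        rw [Finset.mem_range] at hr₁t hr₂t
        have key : ∀ (ra xa rb xb : ℕ), ra < rb → Q ra = z₀ + xa → Q rb = z₀ + xb →
            xb < k → q ∈ PinSet s m t k := by
          intro ra xa rb xb hab hQa hQb hxbk
          have h1 : Q (ra+1) ≤ Q rb := Q_mono (by omega)
          have h2 : Q (ra+1) = Q ra + 8^ra + 1 := Q_succ ra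
          have h8 : 8^ra + 2 ≤ k := by omega
          have hone : 1 ≤ (8:ℕ)^ra := Nat.one_le_pow _ _ (by norm_num)
          have hk2 : k - 2 ≠ 0 := by omega
          have hlog : ra ≤ Nat.log 8 (k-2) :=
            (Nat.le_log_iff_pow_le (by norm_num) hk2).mpr (by omega)
          have hmono : Q ra ≤ Q (Nat.log 8 (k-2)) := Q_mono hlog
          apply Finset.mem_union_left
          apply Finset.mem_union_left
          exact Finset.mem_biUnion.mpr ⟨j, Finset.mem_range.mpr hj,
            Finset.mem_Icc.mpr ⟨hjq, by omega⟩⟩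
        have hrne : r₁ ≠ r₂ := by
          intro h; subst h; exact hx₂ne (by omega)
        rcases lt_or_gt_of_ne hrne with h | h
        · exact hpin (key r₁ x₁ r₂ x₂ h hr₁ hr₂ hx₂k)
        · exact hpin (key r₂ x₂ r₁ x₁ h hr₂ hr₁ hx₁k)
  · -- crosses the boundary to block j+1
    push_neg at hW
    obtain ⟨hW1, hW2⟩ := hW
    have hjs : j < s - 1 := by omega
    have hmin : j = (q - m) / Q t := by
      rcases min_choice ((q - m) / Q t) (s-1) with h | h
      · omega
      · omega
    have hdiv : q - m < (j + 1) * Q t := by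
      have h6 : j * Q t + (q-m) % Q t = q - m := by
        rw [hmin]; exact Nat.div_add_mod' _ _
      have h7 : (q-m) % Q t < Q t := Nat.mod_lt _ hQ
      have h8 : (j+1) * Q t = j * Q t + Q t := by ring
      omega
    apply hpin
    apply Finset.mem_union_left
    apply Finset.mem_union_right
    refine Finset.mem_biUnion.mpr ⟨j+1, Finset.mem_range.mpr (by omega),
      Finset.mem_Ico.mpr ⟨?_, ?_⟩⟩
    · have h8 : (j+1) * Q t = j * Q t + Q t := by ring
      omega
    · omega

lemma subCount_le (hs : 1 ≤ s) (hsm : s ≤ m + 1) (ht : 1 ≤ t) {k : ℕ} (hk : 2 ≤ k) :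
    subCount (Sstr s m t P) k ≤ (2*s + m) * k := by
  have h1 : subCount (Sstr s m t P) k ≤ (WordSet s m t P k).card :=
    Finset.card_le_card (substrings_subset hs ht hk)
  refine le_trans h1 ?_
  have hQlog : Q (Nat.log 8 (k-2)) + 1 ≤ k - 1 := by
    rcases Nat.lt_or_ge k 3 with h3 | h3
    · have hk2 : k = 2 := by omega
      subst hk2
      norm_num [Nat.log_zero_right, Q_zero]
    · have hk2 : k - 2 ≠ 0 := by omega
      have := Nat.pow_log_le_self 8 hk2
      have := Q_le_pow (Nat.log 8 (k-2))
      omega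
  have hA : ((Finset.range s).image (wordA k)).card ≤ s := by
    refine le_trans (Finset.card_image_le) (by simp)
  have hB : (((Finset.range s ×ˢ Finset.range k)).image
      (fun jp : ℕ × ℕ => wordB k jp.1 jp.2)).card ≤ s * k := by
    refine le_trans (Finset.card_image_le) (by simp)
  have hPC : ((Finset.range s).biUnion (fun j =>
      Finset.Icc (m + j * Q t) (m + j * Q t + Q (Nat.log 8 (k-2))))).card ≤ s * (k-1) := by
    refine le_trans Finset.card_biUnion_le ?_
    calc ∑ j ∈ Finset.range s, (Finset.Icc (m + j * Q t)
          (m + j * Q t + Q (Nat.log 8 (k-2)))).card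
        ≤ ∑ _j ∈ Finset.range s, (k-1) := by
          apply Finset.sum_le_sum
          intro j _
          rw [Nat.card_Icc]
          omega
      _ = s * (k-1) := by simp [mul_comm]
  have hPB : ((Finset.range s).biUnion (fun j =>
      Finset.Ico (m + j * Q t + 1 - k) (m + j * Q t))).card
      ≤ (m - (m + 1 - k)) + (s-1) * (k-1) := by
    refine le_trans Finset.card_biUnion_le ?_
    obtain ⟨s', rfl⟩ : ∃ s', s = s' + 1 := ⟨s - 1, by omega⟩
    rw [Finset.sum_range_succ']
    have hh : ∀ i ∈ Finset.range s', (Finset.Ico (m + (i+1) * Q t + 1 - k)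
        (m + (i+1) * Q t)).card ≤ (k-1) := by
      intro i _
      rw [Nat.card_Ico]
      omega
    calc (∑ i ∈ Finset.range s', (Finset.Ico (m + (i+1) * Q t + 1 - k)
            (m + (i+1) * Q t)).card) + (Finset.Ico (m + 0 * Q t + 1 - k) (m + 0 * Q t)).card
        ≤ s' * (k-1) + (m - (m + 1 - k)) := by
          gcongr
          · calc (∑ i ∈ Finset.range s', (Finset.Ico (m + (i+1) * Q t + 1 - k)
                (m + (i+1) * Q t)).card) ≤ ∑ _i ∈ Finset.range s', (k-1) :=
                  Finset.sum_le_sum hh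
            _ = s' * (k-1) := by simp [mul_comm]
          · rw [Nat.card_Ico]
            simp
      _ = (m - (m + 1 - k)) + (s' + 1 - 1) * (k-1) := by simp [Nat.add_comm]
  have hPJ : (Finset.Ico 0 (m + 1 - k)).card = m + 1 - k := by
    rw [Nat.card_Ico]; omega
  have hPin : (PinSet s m t k).card ≤ s * (k-1) + ((m - (m + 1 - k)) + (s-1) * (k-1))
      + (m + 1 - k) := by
    rw [PinSet]
    refine le_trans (Finset.card_union_le _ _) ?_
    gcongr
    · refine le_trans (Finset.card_union_le _ _) ?_
      gcongr
    · omega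
  have hW : (WordSet s m t P k).card ≤ s + s * k + (PinSet s m t k).card := by
    rw [WordSet]
    refine le_trans (Finset.card_union_le _ _) ?_
    gcongr
    · refine le_trans (Finset.card_union_le _ _) ?_
      gcongr
    · exact Finset.card_image_le
  refine le_trans hW (le_trans (by omega : s + s * k + (PinSet s m t k).card ≤
    s + s * k + (s * (k-1) + ((m - (m + 1 - k)) + (s-1) * (k-1)) + (m + 1 - k))) ?_)
  · -- final arithmetic
    obtain ⟨K, rfl⟩ : ∃ K, k = K + 2 := ⟨k - 2, by omega⟩
    have e1 : K + 2 - 1 = K + 1 := by omega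
    rw [e1]
    have h2 : (s-1) * (K+1) ≤ m * (K+1) := Nat.mul_le_mul_right _ (by omega)
    have h3 : (m - (m + 1 - (K+2))) + (m + 1 - (K+2)) ≤ m := by omega
    nlinarith [h2, h3]

end Count

section Letters

variable {s m t P : ℕ}

def letterSet (s m : ℕ) : Finset ℕ :=
  ((Finset.range s).image (fun j => 2*j))
  ∪ ((Finset.range s).image (fun j => 2*j+1))
  ∪ ((Finset.range m).image (fun i => 2*s+i))

lemma card_letterSet : (letterSet s m).card = 2*s + m := by
  rw [letterSet]
  rw [Finset.card_union_of_disjoint, Finset.card_union_of_disjoint]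
  · rw [Finset.card_image_of_injective _ (fun a b h => by omega),
      Finset.card_image_of_injective _ (fun a b h => by omega),
      Finset.card_image_of_injective _ (fun a b h => by omega)]
    simp; ring
  · rw [Finset.disjoint_left]
    intro a ha hb
    obtain ⟨j, hj, rfl⟩ := Finset.mem_image.mp ha
    obtain ⟨j', hj', he⟩ := Finset.mem_image.mp hb
    omega
  · rw [Finset.disjoint_left]
    intro a ha hb
    obtain ⟨i, hi, rfl⟩ := Finset.mem_image.mp hb
    rw [Finset.mem_range] at hi
    rcases Finset.mem_union.mp ha with h | h
    · obtain ⟨j, hj, he⟩ := Finset.mem_image.mp h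
      rw [Finset.mem_range] at hj
      omega
    · obtain ⟨j, hj, he⟩ := Finset.mem_image.mp h
      rw [Finset.mem_range] at hj
      omega

lemma Q_one : Q 1 = 2 := by rw [Q_succ, Q_zero]; norm_num

lemma letter_pos (hs : 1 ≤ s) (ht : 1 ≤ t) :
    ∀ c ∈ letterSet s m, ∃ q, q < NN s m t P ∧ ff s m t q = c := by
  have hQ2 : 2 ≤ Q t := Qt_pos ht
  intro c hc
  rcases Finset.mem_union.mp hc with hc | hc
  · rcases Finset.mem_union.mp hc with hc | hc
    · obtain ⟨j, hj, rfl⟩ := Finset.mem_image.mp hc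
      rw [Finset.mem_range] at hj
      refine ⟨m + j * Q t + 1, ?_, ?_⟩
      · have h : (j+1) * Q t ≤ s * Q t := Nat.mul_le_mul_right _ (by omega)
        have h2 : (j+1) * Q t = j * Q t + Q t := by ring
        rw [NN]; omega
      · apply ff_run ht hj (Or.inl (by omega))
        intro r hr
        rcases Nat.eq_zero_or_pos r with h | h
        · subst h; rw [Q_zero]; omega
        · have : Q 1 ≤ Q r := Q_mono h
          rw [Q_one] at this; omega
    · obtain ⟨j, hj, rfl⟩ := Finset.mem_image.mp hc
      rw [Finset.mem_range] at hj
      refine ⟨m + j * Q t, ?_, ?_⟩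
      · have h : (j+1) * Q t ≤ s * Q t := Nat.mul_le_mul_right _ (by omega)
        have h2 : (j+1) * Q t = j * Q t + Q t := by ring
        rw [NN]; omega
      · have := ff_odd (s := s) (m := m) ht hj (show 0 < t from ht)
        rw [Q_zero] at this
        simpa using this
  · obtain ⟨i, hi, rfl⟩ := Finset.mem_image.mp hc
    rw [Finset.mem_range] at hi
    exact ⟨i, by rw [NN]; omega, ff_junk s t hi⟩

lemma ff_mem_letterSet (hs : 1 ≤ s) (ht : 1 ≤ t) {x : ℕ} (hx : x < NN s m t P) :
    ff s m t x ∈ letterSet s m := by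
  rcases ff_cases (P := P) ht hs hx with ⟨hxm, hval⟩ | ⟨j, hj, z, hxe, hz, hval⟩
  · rw [hval]
    exact Finset.mem_union_right _
      (Finset.mem_image.mpr ⟨x, Finset.mem_range.mpr hxm, rfl⟩)
  · rw [hval]
    by_cases hmem : z ∈ (Finset.range t).image Q
    · rw [if_pos hmem]
      exact Finset.mem_union_left _ (Finset.mem_union_right _
        (Finset.mem_image.mpr ⟨j, Finset.mem_range.mpr hj, rfl⟩))
    · rw [if_neg hmem]
      exact Finset.mem_union_left _ (Finset.mem_union_left _
        (Finset.mem_image.mpr ⟨j, Finset.mem_range.mpr hj, rfl⟩))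

lemma win_one (q : ℕ) : win s m t q 1 = [ff s m t q] := by
  have : List.range 1 = [0] := rfl
  rw [win, this]
  simp

lemma substrings_one (hs : 1 ≤ s) (ht : 1 ≤ t) :
    substrings (Sstr s m t P) 1 = (letterSet s m).image (fun c => [c]) := by
  ext u
  constructor
  · intro hu
    obtain ⟨q, hq, rfl⟩ := mem_substrings hu
    rw [win_one]
    exact Finset.mem_image.mpr ⟨ff s m t q, ff_mem_letterSet (P := P) hs ht (by omega), rfl⟩
  · intro hu
    obtain ⟨c, hc, rfl⟩ := Finset.mem_image.mp hu
    obtain ⟨q, hq, hfq⟩ := letter_pos (P := P) hs ht c hc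
    have := win_mem_substrings (s := s) (m := m) (t := t) (P := P) (q := q) (k := 1) (by omega)
    rw [win_one, hfq] at this
    exact this

lemma subCount_one (hs : 1 ≤ s) (ht : 1 ≤ t) :
    subCount (Sstr s m t P) 1 = 2*s + m := by
  rw [subCount, substrings_one hs ht,
    Finset.card_image_of_injective _ (fun a b h => by simpa using h), card_letterSet]

end Letters

lemma delta_eq {S : List ℕ} {d : ℕ} (hne : S ≠ []) (h1 : subCount S 1 = d)
    (hall : ∀ k, 1 ≤ k → k ≤ S.length → subCount S k ≤ d * k) : delta S = (d : ℚ) := by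
  rw [delta, dif_neg hne]
  have hlen : 1 ≤ S.length := by
    cases S with
    | nil => exact absurd rfl hne
    | cons a l => simp
  have h1m : (1 : ℕ) ∈ Finset.Icc 1 S.length := Finset.mem_Icc.mpr ⟨le_refl _, hlen⟩
  apply le_antisymm
  · apply Finset.sup'_le
    intro k hk
    rw [Finset.mem_Icc] at hk
    have hk1 : (1:ℚ) ≤ (k:ℚ) := by exact_mod_cast hk.1
    rw [div_le_iff₀ (by linarith)]
    have := hall k hk.1 hk.2
    push_cast
    exact_mod_cast (by exact_mod_cast this : (subCount S k : ℚ) ≤ (d : ℚ) * (k:ℚ))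
  · have := Finset.le_sup' (fun k => (subCount S k : ℚ) / k) h1m
    simp only [h1, Nat.cast_one, div_one] at this
    exact this

section Gamma

variable {s m t P : ℕ}

lemma attractor_full (S : List ℕ) : IsAttractor S (Finset.Icc 1 S.length) := by
  refine ⟨fun p hp => Finset.mem_Icc.mp hp, fun i j hi hij hj => ?_⟩
  exact ⟨i, j, hi, hij, hj, rfl, ⟨i, Finset.mem_Icc.mpr ⟨hi, le_trans hij hj⟩, le_refl i, hij⟩⟩

lemma gamma_exists (S : List ℕ) : ∃ Γ : Finset ℕ, IsAttractor S Γ ∧ Γ.card = gamma S := by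
  have hne : {m | ∃ Γ : Finset ℕ, IsAttractor S Γ ∧ Γ.card = m}.Nonempty :=
    ⟨(Finset.Icc 1 S.length).card, _, attractor_full S, rfl⟩
  obtain ⟨Γ, hΓ, hcard⟩ := Nat.sInf_mem hne
  exact ⟨Γ, hΓ, hcard⟩

lemma attractor_window {Γ : Finset ℕ} (hΓ : IsAttractor (Sstr s m t P) Γ)
    {q₀ ℓ : ℕ} (hℓ : 1 ≤ ℓ) (hq₀ : q₀ + ℓ ≤ NN s m t P) :
    ∃ p ∈ Γ, ∃ q', q' + ℓ ≤ NN s m t P ∧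
      (∀ x < ℓ, ff s m t (q' + x) = ff s m t (q₀ + x)) ∧ q' < p ∧ p ≤ q' + ℓ := by
  obtain ⟨hmem, hmain⟩ := hΓ
  have hlen : (Sstr s m t P).length = NN s m t P := Sstr_length
  obtain ⟨i', j', hi', hij', hj', hcontent, p, hp, hpi, hpj⟩ :=
    hmain (q₀+1) (q₀+ℓ) (by omega) (by omega) (by rw [hlen]; omega)
  rw [hlen] at hj'
  have he1 : q₀ + ℓ - (q₀+1) + 1 = ℓ := by omega
  have he2 : q₀ + 1 - 1 = q₀ := by omega
  rw [he1, he2, Sstr_drop_take hq₀] at hcontent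
  have hlen2 : (((Sstr s m t P).drop (i'-1)).take (j'-i'+1)).length = ℓ := by
    rw [hcontent, win_length]
  rw [List.length_take, List.length_drop, hlen] at hlen2
  have hji : j' - i' + 1 = ℓ := by omega
  rw [hji, Sstr_drop_take (by omega : (i'-1) + ℓ ≤ NN s m t P)] at hcontent
  exact ⟨p, hp, i'-1, by omega, win_ptwise hcontent, by omega, by omega⟩

lemma gamma_letters {Γ : Finset ℕ} (hs : 1 ≤ s) (ht : 1 ≤ t)
    (hΓ : IsAttractor (Sstr s m t P) Γ) : 2*s + m ≤ Γ.card := by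
  classical
  have key : ∀ c ∈ letterSet s m, ∃ p, p ∈ Γ ∧ 1 ≤ p ∧ ff s m t (p-1) = c := by
    intro c hc
    obtain ⟨q, hq, hfq⟩ := letter_pos (P := P) hs ht c hc
    obtain ⟨p, hp, q', hq', hpt, hp1, hp2⟩ :=
      attractor_window hΓ (le_refl 1) (by omega : q + 1 ≤ NN s m t P)
    have h0 := hpt 0 (by omega)
    simp only [Nat.add_zero] at h0
    refine ⟨p, hp, by omega, ?_⟩
    have hpq : p - 1 = q' := by omega
    rw [hpq, h0, hfq]
  set φ : ℕ → ℕ := fun c =>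
    if h : ∃ p, p ∈ Γ ∧ 1 ≤ p ∧ ff s m t (p-1) = c then h.choose else 0 with hφdef
  have hφ : ∀ c ∈ letterSet s m, φ c ∈ Γ ∧ 1 ≤ φ c ∧ ff s m t (φ c - 1) = c := by
    intro c hc
    have hex := key c hc
    simp only [hφdef, dif_pos hex]
    exact hex.choose_spec
  calc 2*s + m = (letterSet s m).card := card_letterSet.symm
  _ ≤ Γ.card := by
      apply Finset.card_le_card_of_injOn φ (fun c hc => (hφ c hc).1)
      intro a ha b hb hab
      have h1 := (hφ a ha).2.2
      have h2 := (hφ b hb).2.2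
      rw [hab, h2] at h1
      exact h1.symm

lemma gamma_features {Γ : Finset ℕ} (hs : 1 ≤ s) (ht : 1 ≤ t)
    (hΓ : IsAttractor (Sstr s m t P) Γ) : s * (t/2) ≤ Γ.card := by
  classical
  have hQ2 : 2 ≤ Q t := Qt_pos ht
  have key : ∀ j e : ℕ, j < s → 2*e + 2 ≤ t → ∃ p, p ∈ Γ ∧
      m + j * Q t + Q (2*e) + 1 ≤ p ∧ p ≤ m + j * Q t + Q (2*e+1) + 1 := by
    intro j e hj he
    have hone : 1 ≤ (8:ℕ)^(2*e) := Nat.one_le_pow _ _ (by norm_num)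
    have hQsucc : Q (2*e+1) = Q (2*e) + 8^(2*e) + 1 := Q_succ _
    have hQt1 : Q (2*e+1) + 1 ≤ Q t := by
      have h1 : Q (2*e+1) < Q (2*e+2) := Q_strictMono (by omega)
      have h2 : Q (2*e+2) ≤ Q t := Q_mono (by omega)
      omega
    have hjs : (j+1) * Q t ≤ s * Q t := Nat.mul_le_mul_right _ (by omega)
    have hjs2 : (j+1) * Q t = j * Q t + Q t := by ring
    have hq₀N : (m + j * Q t + Q (2*e)) + (8^(2*e) + 2) ≤ NN s m t P := by
      rw [NN]; omega
    obtain ⟨p, hp, q', hq'N, hpt, hp1, hp2⟩ :=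
      attractor_window hΓ (by omega : 1 ≤ 8^(2*e) + 2) hq₀N
    set q₀ := m + j * Q t + Q (2*e) with hq₀def
    have hc0 : ff s m t q₀ = 2*j+1 := ff_odd ht hj (by omega)
    have hcend : ff s m t (q₀ + (8^(2*e)+1)) = 2*j+1 := by
      have hee : q₀ + (8^(2*e)+1) = m + j * Q t + Q (2*e+1) := by omega
      rw [hee]; exact ff_odd ht hj (by omega)
    have hcmid : ∀ x, 0 < x → x < 8^(2*e)+1 → ff s m t (q₀ + x) = 2*j := by
      intro x h0 hx
      have hee : q₀ + x = m + j * Q t + (Q (2*e) + x) := by omega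
      rw [hee]
      apply ff_run ht hj (Or.inl (by omega))
      intro r hr hre
      have h1 : 2*e < r := by
        by_contra hcon
        have := Q_mono (show r ≤ 2*e by omega)
        omega
      have h2 : r < 2*e+1 := by
        by_contra hcon
        have := Q_mono (show 2*e+1 ≤ r by omega)
        omega
      omega
    have hf0 : ff s m t q' = 2*j+1 := by
      have h0 := hpt 0 (by omega)
      simp only [Nat.add_zero] at h0
      rw [h0, hc0]
    have hfe : ff s m t (q' + (8^(2*e)+1)) = 2*j+1 := by
      have h0 := hpt (8^(2*e)+1) (by omega)
      rw [h0, hcend]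
    obtain ⟨u, hu, hqu⟩ := ff_odd_inv (P := P) ht hs (by omega) hj hf0
    obtain ⟨v, hv, hqv⟩ := ff_odd_inv (P := P) ht hs (by omega) hj hfe
    have hQv : Q v = Q u + 8^(2*e) + 1 := by omega
    have huv : u < v := by
      by_contra hcon
      have := Q_mono (show v ≤ u by omega)
      omega
    have hu2e : u ≤ 2*e := by
      have h1 : Q (u+1) ≤ Q v := Q_mono (by omega)
      have h2 : Q (u+1) = Q u + 8^u + 1 := Q_succ u
      have h3 : (8:ℕ)^u ≤ 8^(2*e) := by omega
      exact (Nat.pow_le_pow_iff_right (by norm_num)).mp h3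
    have hueq : u = 2*e := by
      by_contra hcon
      have hult : u < 2*e := by omega
      have hplt : (8:ℕ)^u < 8^(2*e) := Nat.pow_lt_pow_right (by norm_num) hult
      have hone8u : 1 ≤ (8:ℕ)^u := Nat.one_le_pow _ _ (by norm_num)
      have hmid := hcmid (8^u+1) (by omega) (by omega)
      have hne2 : ff s m t (q' + (8^u+1)) = 2*j+1 := by
        have hee : q' + (8^u+1) = m + j * Q t + Q (u+1) := by
          rw [Q_succ]; omega
        rw [hee]; exact ff_odd ht hj (by omega)
      have h0 := hpt (8^u+1) (by omega)
      rw [hne2, hmid] at h0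
      omega
    subst hueq
    exact ⟨p, hp, by omega, by omega⟩
  set φ : ℕ × ℕ → ℕ := fun je =>
    if h : ∃ p, p ∈ Γ ∧ m + je.1 * Q t + Q (2*je.2) + 1 ≤ p ∧
        p ≤ m + je.1 * Q t + Q (2*je.2+1) + 1 then h.choose else 0 with hφdef
  have hφ : ∀ je ∈ (Finset.range s) ×ˢ (Finset.range (t/2)), φ je ∈ Γ ∧
      m + je.1 * Q t + Q (2*je.2) + 1 ≤ φ je ∧
      φ je ≤ m + je.1 * Q t + Q (2*je.2+1) + 1 := by
    intro je hje
    rw [Finset.mem_product, Finset.mem_range, Finset.mem_range] at hje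
    have hex := key je.1 je.2 hje.1 (by omega)
    simp only [hφdef, dif_pos hex]
    exact hex.choose_spec
  have hbound : ∀ je ∈ (Finset.range s) ×ˢ (Finset.range (t/2)),
      m + je.1 * Q t < φ je ∧ φ je ≤ m + (je.1 + 1) * Q t := by
    intro je hje
    obtain ⟨_, h1, h2⟩ := hφ je hje
    rw [Finset.mem_product, Finset.mem_range, Finset.mem_range] at hje
    have hQt1 : Q (2*je.2+1) + 1 ≤ Q t := by
      have ha : Q (2*je.2+1) < Q (2*je.2+2) := Q_strictMono (by omega)
      have hb : Q (2*je.2+2) ≤ Q t := Q_mono (by omega)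
      omega
    have hr : (je.1+1) * Q t = je.1 * Q t + Q t := by ring
    exact ⟨by omega, by omega⟩
  have hcard : ((Finset.range s) ×ˢ (Finset.range (t/2))).card = s * (t/2) := by
    rw [Finset.card_product, Finset.card_range, Finset.card_range]
  rw [← hcard]
  apply Finset.card_le_card_of_injOn φ (fun je hje => (hφ je hje).1)
  intro a ha b hb hab
  have hba := hbound a ha
  have hbb := hbound b hb
  have hfa := hφ a ha
  have hfb := hφ b hb
  have hj : a.1 = b.1 := by
    by_contra hcon
    rcases Nat.lt_or_ge a.1 b.1 with h | h
    · have : (a.1+1) * Q t ≤ b.1 * Q t := Nat.mul_le_mul_right _ (by omega)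
      omega
    · have hlt : b.1 < a.1 := by omega
      have : (b.1+1) * Q t ≤ a.1 * Q t := Nat.mul_le_mul_right _ (by omega)
      omega
  have hE : a.2 = b.2 := by
    by_contra hcon
    have ha1 := hfa.2.1
    have ha2 := hfa.2.2
    have hb1 := hfb.2.1
    have hb2 := hfb.2.2
    rw [hj] at ha1 ha2
    rcases Nat.lt_or_ge a.2 b.2 with h | h
    · have hq1 : Q (2*a.2+1) + 1 ≤ Q (2*a.2+2) := by
        have := Q_strictMono (show 2*a.2+1 < 2*a.2+2 by omega); omega
      have hq2 : Q (2*a.2+2) ≤ Q (2*b.2) := Q_mono (by omega)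
      omega
    · have hlt : b.2 < a.2 := by omega
      have hq1 : Q (2*b.2+1) + 1 ≤ Q (2*b.2+2) := by
        have := Q_strictMono (show 2*b.2+1 < 2*b.2+2 by omega); omega
      have hq2 : Q (2*b.2+2) ≤ Q (2*a.2) := Q_mono (by omega)
      omega
  exact Prod.ext hj hE

end Gamma

end GD

theorem exists_gamma_ge_delta_log : ∃ c : ℝ, 0 < c ∧
    ∀ n d : ℕ, 2 ≤ n → 2 ≤ d → d ≤ n →
      ∃ S : List ℕ, S.length = n ∧ delta S = (d : ℚ) ∧
        c * (d : ℝ) * Real.logb 2 (2 * (n : ℝ) / (d : ℝ)) ≤ (gamma S : ℝ) := by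
  classical
  refine ⟨1/162, by norm_num, ?_⟩
  intro n d hn hd hdn
  set s := (d+1)/3 with hs_def
  set m := d - 2*s with hm_def
  have hs1 : 1 ≤ s := by omega
  have h2s : 2*s ≤ d := by omega
  have hsm1 : s ≤ m + 1 := by omega
  have hd6 : d ≤ 6*s := by omega
  have hdm : 2*s + m = d := by omega
  set tt := Nat.findGreatest (fun u => m + s * GD.Q u ≤ n) n with htt_def
  have hP1 : m + s * GD.Q 1 ≤ n := by rw [GD.Q_one]; omega
  have htt1 : 1 ≤ tt := Nat.le_findGreatest (by omega) hP1
  have httspec : m + s * GD.Q tt ≤ n := Nat.findGreatest_spec (P := fun u => m + s * GD.Q u ≤ n) (m := 1) (by omega : 1 ≤ n) hP1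
  have httn : tt ≤ n := Nat.findGreatest_le n
  have htmax : n < m + s * GD.Q (tt+1) := by
    rcases Nat.lt_or_ge n (tt+1) with h | h
    · have h1 := GD.Q_ge (tt+1)
      have h2 : GD.Q (tt+1) ≤ s * GD.Q (tt+1) := Nat.le_mul_of_pos_left _ (by omega)
      omega
    · have hng := Nat.findGreatest_is_greatest (show tt < tt+1 by omega) h
      simp only [htt_def] at hng ⊢
      omega
  set Pp := n - (m + s * GD.Q tt) with hPp_def
  have hNn : GD.NN s m tt Pp = n := by rw [GD.NN]; omega
  have hlen : (GD.Sstr s m tt Pp).length = n := by rw [GD.Sstr_length, hNn]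
  refine ⟨GD.Sstr s m tt Pp, hlen, ?_, ?_⟩
  · -- delta = d
    apply GD.delta_eq
    · intro hcon
      rw [hcon] at hlen
      simp at hlen
      omega
    · rw [GD.subCount_one hs1 htt1]; omega
    · intro k hk1 hk2
      rcases Nat.eq_or_lt_of_le hk1 with h1 | h2
      · rw [← h1, GD.subCount_one hs1 htt1]; omega
      · have hb := GD.subCount_le (P := Pp) hs1 hsm1 htt1 (by omega : 2 ≤ k)
        rw [hdm] at hb
        exact hb
  · -- gamma lower bound
    obtain ⟨Γ, hΓ, hcard⟩ := GD.gamma_exists (GD.Sstr s m tt Pp)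
    have hg1 : d ≤ gamma (GD.Sstr s m tt Pp) := by
      rw [← hcard]
      have := GD.gamma_letters hs1 htt1 hΓ
      omega
    have hg2 : s * (tt/2) ≤ gamma (GD.Sstr s m tt Pp) := by
      rw [← hcard]
      exact GD.gamma_features hs1 htt1 hΓ
    set g := gamma (GD.Sstr s m tt Pp) with hgdef
    have hnat : d * (3*tt + 6) ≤ 162 * g := by
      rcases Nat.lt_or_ge tt 19 with h | h
      · calc d * (3*tt+6) ≤ d * 63 := Nat.mul_le_mul_left _ (by omega)
        _ ≤ 162 * d := by omega
        _ ≤ 162 * g := Nat.mul_le_mul_left _ hg1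
      · calc d * (3*tt+6) ≤ (6*s) * (3*tt+6) := Nat.mul_le_mul_right _ hd6
        _ ≤ (6*s) * (27 * (tt/2)) := Nat.mul_le_mul_left _ (by omega)
        _ = 162 * (s * (tt/2)) := by ring
        _ ≤ 162 * g := Nat.mul_le_mul_left _ hg2
    have hdR : (0:ℝ) < (d:ℝ) := by exact_mod_cast (by omega : 0 < d)
    have hnR : (0:ℝ) < (n:ℝ) := by exact_mod_cast (by omega : 0 < n)
    have hnat2 : 2*n ≤ d * 8^(tt+2) := by
      have hq8 : GD.Q (tt+1) ≤ 8^(tt+1) := GD.Q_le_pow _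
      have hsd : s ≤ d := by omega
      have h1 : s * GD.Q (tt+1) ≤ d * 8^(tt+1) := Nat.mul_le_mul hsd hq8
      have h8 : d * 8^(tt+2) = 8 * (d * 8^(tt+1)) := by rw [pow_succ]; ring
      have hone : 1 ≤ (8:ℕ)^(tt+1) := Nat.one_le_pow _ _ (by norm_num)
      have hX : d ≤ d * 8^(tt+1) := Nat.le_mul_of_pos_right _ (by omega)
      omega
    have hlogb : Real.logb 2 (2 * (n:ℝ) / (d:ℝ)) ≤ ((3*tt + 6 : ℕ) : ℝ) := by
      have harg : 2 * (n:ℝ) / (d:ℝ) ≤ (2:ℝ)^(3*tt+6) := by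
        rw [div_le_iff₀ hdR]
        have hc : ((2*n : ℕ):ℝ) ≤ ((d * 8^(tt+2) : ℕ):ℝ) := by exact_mod_cast hnat2
        push_cast at hc
        calc 2 * (n:ℝ) ≤ (d:ℝ) * (8:ℝ)^(tt+2) := by linarith
        _ = (2:ℝ)^(3*tt+6) * (d:ℝ) := by
            rw [show (8:ℝ) = 2^3 by norm_num, ← pow_mul]
            ring_nf
      have hpos : (0:ℝ) < 2 * (n:ℝ) / (d:ℝ) := by positivity
      have hpow : (0:ℝ) < (2:ℝ)^(3*tt+6) := by positivity
      calc Real.logb 2 (2 * (n:ℝ) / (d:ℝ)) ≤ Real.logb 2 ((2:ℝ)^(3*tt+6)) :=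
        (Real.logb_le_logb (by norm_num) hpos hpow).mpr harg
      _ = ((3*tt + 6 : ℕ) : ℝ) := by
          rw [Real.logb_pow, Real.logb_self_eq_one (by norm_num)]
          push_cast
          ring
    have hgreal : (d:ℝ) * ((3*tt + 6 : ℕ) : ℝ) ≤ 162 * (g:ℝ) := by
      exact_mod_cast hnat
    calc (1/162 : ℝ) * (d:ℝ) * Real.logb 2 (2 * (n:ℝ) / (d:ℝ))
        ≤ (1/162 : ℝ) * (d:ℝ) * ((3*tt + 6 : ℕ) : ℝ) := by
          apply mul_le_mul_of_nonneg_left hlogb (by positivity)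
    _ ≤ (g:ℝ) := by nlinarith [hgreal]
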